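/- Let E be a topological vector space over ℝ and let B ⊆ E be a linearly independent subset. If there exist a Polish space Z and a continuous bijection ξ : Z → B (where B carries the subspace topology), then there exist a Polish space S and a continuous bijection from S onto the linear span of B (with its subspace topology). In particular, if E is a Polish topological vector space and B is a linearly independent Borel subset of E, then the linear span of B is a Borel subset of E. -/

import Mathlib

open Set Filter Topology


theorem span_aux {E : Type*} [TopologicalSpace E] [AddCommGroup E] [Module ℝ E]
    [IsTopologicalAddGroup E] [ContinuousSMul ℝ E] (B : Set E)
    (hB : LinearIndependent ℝ ((↑) : B → E))
    (Z : Type) [tZ : TopologicalSpace Z] [PolishSpace Z]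
    (f : Z → E) (hfc : Continuous f) (hfi : Function.Injective f) (hfr : Set.range f = B)
    (e : Z → ℝ) (hec : Continuous e) (hei : Function.Injective e) :
    ∃ (S : Type) (tS : TopologicalSpace S), @PolishSpace S tS ∧
      ∃ σ : S → (Submodule.span ℝ B : Set E), @Continuous S _ tS _ σ ∧ Function.Bijective σ := by
  classical
  letI : LinearOrder Z := LinearOrder.lift' e hei
  have hlt : ∀ a b : Z, a < b ↔ e a < e b := by
    intro a b
    rw [lt_iff_le_not_ge, lt_iff_le_not_ge]
    exact Iff.rfl
  -- the pieces
  set P : ∀ n : ℕ, Set ((Fin n → ℝ) × (Fin n → Z)) := fun n =>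
    {p | (∀ i, p.1 i ≠ 0) ∧ StrictMono p.2} with hP
  have hPopen : ∀ n, IsOpen (P n) := by
    intro n
    have h1 : IsOpen {p : (Fin n → ℝ) × (Fin n → Z) | ∀ i, p.1 i ≠ 0} := by
      rw [show {p : (Fin n → ℝ) × (Fin n → Z) | ∀ i, p.1 i ≠ 0}
            = ⋂ i, {p | p.1 i ≠ 0} by ext p; simp]
      exact isOpen_iInter_of_finite fun i =>
        isOpen_ne.preimage ((continuous_apply i).comp continuous_fst)
    have h2 : IsOpen {p : (Fin n → ℝ) × (Fin n → Z) | StrictMono p.2} := by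
      rw [show {p : (Fin n → ℝ) × (Fin n → Z) | StrictMono p.2}
            = ⋂ (i : Fin n) (j : Fin n) (_ : i < j), {p | e (p.2 i) < e (p.2 j)} by
          ext p
          simp only [mem_iInter, mem_setOf_eq]
          constructor
          · intro h i j hij
            exact (hlt _ _).1 (h hij)
          · intro h a b hab
            exact (hlt _ _).2 (h a b hab)]
      exact isOpen_iInter_of_finite fun i => isOpen_iInter_of_finite fun j =>
        isOpen_iInter_of_finite fun hij =>
          isOpen_lt (hec.comp ((continuous_apply i).comp continuous_snd))
            (hec.comp ((continuous_apply j).comp continuous_snd))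
    exact h1.inter h2
  haveI hPol : ∀ n : ℕ, PolishSpace (P n) := fun n => (hPopen n).polishSpace
  -- the embedding of Z into B
  have hmemB : ∀ z : Z, f z ∈ B := fun z => by rw [← hfr]; exact mem_range_self z
  set b : Z → B := fun z => ⟨f z, hmemB z⟩ with hb
  have hbinj : Function.Injective b := fun a₁ a₂ h => hfi (congrArg Subtype.val h)
  -- the space S
  refine ⟨Σ n : ℕ, ↥(P n), inferInstance, inferInstance, ?_⟩
  have hmem : ∀ s : Σ n : ℕ, ↥(P n), ∑ i, s.2.1.1 i • f (s.2.1.2 i) ∈ Submodule.span ℝ B :=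
    fun s => Submodule.sum_mem _ fun i _ =>
      Submodule.smul_mem _ _ (Submodule.subset_span (hmemB _))
  refine ⟨fun s => ⟨∑ i, s.2.1.1 i • f (s.2.1.2 i), hmem s⟩, ?_, ?_, ?_⟩
  · -- continuity
    apply continuous_sigma
    intro n
    show Continuous fun p : ↥(P n) => (⟨∑ i : Fin n, (p : (Fin n → ℝ) × (Fin n → Z)).1 i • f ((p : (Fin n → ℝ) × (Fin n → Z)).2 i), hmem ⟨n, p⟩⟩ : (Submodule.span ℝ B : Set E))
    apply Continuous.subtype_mk
    apply continuous_finset_sum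
    intro i _
    exact ((continuous_apply i).comp (continuous_fst.comp continuous_subtype_val)).smul
      (hfc.comp ((continuous_apply i).comp (continuous_snd.comp continuous_subtype_val)))
  · -- injectivity
    have hL : ∀ (n : ℕ) (c : Fin n → ℝ) (z : Fin n → Z),
        Finsupp.linearCombination ℝ ((↑) : B → E) (∑ i, Finsupp.single (b (z i)) (c i))
          = ∑ i, c i • f (z i) := by
      intro n c z
      rw [map_sum]
      simp [Finsupp.linearCombination_single, hb]
    have hLeval : ∀ (n : ℕ) (c : Fin n → ℝ) (z : Fin n → Z), Function.Injective z →
        ∀ j, (∑ i, Finsupp.single (b (z i)) (c i)) (b (z j)) = c j := by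
      intro n c z hz j
      rw [Finsupp.finset_sum_apply, Finset.sum_eq_single j]
      · simp
      · intro i _ hij
        rw [Finsupp.single_apply, if_neg]
        exact fun hh => hij (hz (hbinj hh))
      · simp
    have hsupp : ∀ (n : ℕ) (c : Fin n → ℝ) (z : Fin n → Z), (∀ i, c i ≠ 0) →
        Function.Injective z →
        (∑ i, Finsupp.single (b (z i)) (c i)).support = Finset.univ.image (fun i => b (z i)) := by
      intro n c z hc hz
      ext x
      simp only [Finsupp.mem_support_iff, Finset.mem_image, Finset.mem_univ, true_and]
      constructor
      · intro hx
        by_contra hcon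
        push_neg at hcon
        apply hx
        rw [Finsupp.finset_sum_apply]
        apply Finset.sum_eq_zero
        intro i _
        rw [Finsupp.single_apply, if_neg (hcon i)]
      · rintro ⟨i, rfl⟩
        rw [hLeval n c z hz i]
        exact hc i
    rintro ⟨n, ⟨⟨c, z⟩, hc, hz⟩⟩ ⟨m, ⟨⟨d, w⟩, hd, hw⟩⟩ hst
    have hsum : ∑ i, c i • f (z i) = ∑ i, d i • f (w i) := congrArg Subtype.val hst
    have hl : (∑ i, Finsupp.single (b (z i)) (c i)) = ∑ i, Finsupp.single (b (w i)) (d i) :=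
      hB (by rw [hL, hL]; exact hsum)
    have himg : Finset.univ.image (fun i => b (z i)) = Finset.univ.image (fun i => b (w i)) := by
      rw [← hsupp n c z hc hz.injective, ← hsupp m d w hd hw.injective, hl]
    have hnm : n = m := by
      have hi1 : Function.Injective fun i => b (z i) := fun i j hij => hz.injective (hbinj hij)
      have hi2 : Function.Injective fun i => b (w i) := fun i j hij => hw.injective (hbinj hij)
      have h1 : (Finset.univ.image (fun i => b (z i))).card = n := by
        rw [Finset.card_image_of_injective _ hi1, Finset.card_univ, Fintype.card_fin]
      have h2 : (Finset.univ.image (fun i => b (w i))).card = m := by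
        rw [Finset.card_image_of_injective _ hi2, Finset.card_univ, Fintype.card_fin]
      rw [← h1, ← h2, himg]
    subst hnm
    have hrange : Set.range z = Set.range w := by
      apply Set.image_injective.2 hbinj
      have := congrArg (Finset.image Subtype.val) himg
      -- alternate: use coe of finsets
      have h3 : b '' Set.range z = b '' Set.range w := by
        rw [← Set.image_univ, ← Set.image_univ, ← Set.image_comp, ← Set.image_comp]
        have := congrArg (fun t : Finset B => (t : Set B)) himg
        simpa [Finset.coe_image, Set.image_univ] using this
      exact h3
    haveI : WellFoundedLT (Fin n) := Finite.to_wellFoundedLT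
    have hzw : z = w := (StrictMono.range_inj hz hw).1 hrange
    subst hzw
    have hcd : c = d := by
      funext j
      have h4 := congrArg (fun l : B →₀ ℝ => l (b (z j))) hl
      simpa [hLeval n c z hz.injective j, hLeval n d z hz.injective j] using h4
    subst hcd
    rfl
  · -- surjectivity
    rintro ⟨x, hx⟩
    obtain ⟨co, hcoB, hcosum⟩ := Submodule.mem_span_set.1 hx
    choose q hq using fun y : B => show ∃ z : Z, f z = (y : E) from by
      have hy : (y : E) ∈ Set.range f := by rw [hfr]; exact y.2
      exact hy
    have hqinj : Function.Injective q := fun a₁ a₂ hab =>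
      Subtype.ext (by rw [← hq a₁, ← hq a₂, hab])
    set T : Finset Z := co.support.attach.image (fun x => q ⟨x.1, hcoB x.2⟩) with hT
    set n := co.support.card with hn
    have hTcard : T.card = n := by
      rw [hT, Finset.card_image_of_injective, Finset.card_attach]
      intro a₁ a₂ hab
      exact Subtype.ext (congrArg (Subtype.val : B → E) (hqinj hab))
    set z : Fin n → Z := fun i => ((T.orderIsoOfFin hTcard) i : Z) with hz
    have hzmono : StrictMono z := fun i j hij =>
      Subtype.coe_lt_coe.2 ((T.orderIsoOfFin hTcard).strictMono hij)
    have hfT : ∀ v ∈ T, f v ∈ co.support := by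
      intro v hv
      rw [hT, Finset.mem_image] at hv
      obtain ⟨a, _, rfl⟩ := hv
      rw [hq ⟨a.1, hcoB a.2⟩]
      exact a.2
    have hzT : ∀ i, z i ∈ T := fun i => ((T.orderIsoOfFin hTcard) i).2
    set c : Fin n → ℝ := fun i => co (f (z i)) with hc
    have hcne : ∀ i, c i ≠ 0 := fun i => Finsupp.mem_support_iff.1 (hfT _ (hzT i))
    refine ⟨⟨n, ⟨⟨c, z⟩, hcne, hzmono⟩⟩, ?_⟩
    apply Subtype.ext
    show ∑ i, c i • f (z i) = x
    have h5 : ∑ i, c i • f (z i) = ∑ v ∈ T, co (f v) • f v := by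
      rw [← Finset.sum_coe_sort T (fun v => co (f v) • f v)]
      exact Fintype.sum_equiv (T.orderIsoOfFin hTcard).toEquiv _ _ (fun i => rfl)
    rw [h5, hT, Finset.sum_image (by intro a₁ _ a₂ _ hab; exact Subtype.ext (congrArg (Subtype.val : B → E) (hqinj hab)))]
    rw [← hcosum]
    rw [Finsupp.sum]
    rw [← Finset.sum_attach co.support (fun y => co y • y)]
    apply Finset.sum_congr rfl
    intro a _
    rw [hq ⟨a.1, hcoB a.2⟩]

/-- If `B` is a linearly independent subset of a topological vector space `E` which is the
image of a Polish space under a continuous bijection, then so is the linear span of `B`.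
In particular, if `E` is a Polish topological vector space and `B` is a Borel linearly
independent subset, then the linear span of `B` is Borel. -/
theorem statement9 {E : Type*} [TopologicalSpace E] [AddCommGroup E] [Module ℝ E]
    [IsTopologicalAddGroup E] [ContinuousSMul ℝ E] (B : Set E)
    (hB : LinearIndependent ℝ ((↑) : B → E))
    (h : ∃ (Z : Type) (tZ : TopologicalSpace Z), @PolishSpace Z tZ ∧
      ∃ ξ : Z → B, @Continuous Z B tZ _ ξ ∧ Function.Bijective ξ) :
    (∃ (S : Type) (tS : TopologicalSpace S), @PolishSpace S tS ∧
      ∃ σ : S → (Submodule.span ℝ B : Set E), @Continuous S _ tS _ σ ∧ Function.Bijective σ) ∧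
    (∀ (mE : MeasurableSpace E), @BorelSpace E _ mE → PolishSpace E →
      @MeasurableSet E mE B → @MeasurableSet E mE (Submodule.span ℝ B : Set E)) := by
  have part1 : ∃ (S : Type) (tS : TopologicalSpace S), @PolishSpace S tS ∧
      ∃ σ : S → (Submodule.span ℝ B : Set E), @Continuous S _ tS _ σ ∧ Function.Bijective σ := by
    obtain ⟨Z, tZ, hpz, ξ, hξc, hξb⟩ := h
    letI := tZ
    haveI := hpz
    set f : Z → E := fun z => (ξ z : E) with hfdef
    have hfc : Continuous f := continuous_subtype_val.comp hξc
    have hfi : Function.Injective f := fun a₁ a₂ hh => hξb.1 (Subtype.ext hh)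
    have hfr : Set.range f = B := by
      have h1 : Set.range f = Subtype.val '' Set.range ξ := Set.range_comp _ _
      rw [h1, Set.range_eq_univ.mpr hξb.2, Set.image_univ, Subtype.range_coe]
    letI mZ : MeasurableSpace Z := borel Z
    haveI : BorelSpace Z := ⟨rfl⟩
    obtain ⟨e, he⟩ := MeasureTheory.exists_measurableEmbedding_real Z
    obtain ⟨t', ht'le, hec, ht'pol⟩ := he.measurable.exists_continuous
    have hfc' : @Continuous Z E t' _ f := by
      have hid : @Continuous Z Z t' tZ id := continuous_id_of_le ht'le
      exact @Continuous.comp Z Z E t' tZ _ id f hfc hid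
    exact @span_aux E _ _ _ _ _ B hB Z t' ht'pol f hfc' hfi hfr e hec he.injective
  refine ⟨part1, ?_⟩
  intro mE hBorelE hPolE hBmeas
  obtain ⟨S, tS, hpS, σ, hσc, hσb⟩ := part1
  letI := tS
  haveI := hpS
  letI : MeasurableSpace S := borel S
  haveI : BorelSpace S := ⟨rfl⟩
  haveI := hPolE
  haveI := hBorelE
  set ψ : S → E := fun s => (σ s : E) with hψdef
  have hψc : Continuous ψ := continuous_subtype_val.comp hσc
  have hψi : Function.Injective ψ := fun a₁ a₂ hh => hσb.1 (Subtype.ext hh)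
  have hrange : Set.range ψ = (Submodule.span ℝ B : Set E) := by
    have h1 : Set.range ψ = Subtype.val '' Set.range σ := Set.range_comp _ _
    rw [h1, Set.range_eq_univ.mpr hσb.2, Set.image_univ, Subtype.range_coe]
  rw [← hrange]
  exact (hψc.measurableEmbedding hψi).measurableSet_range
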